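/- arXiv:1010.1468 — 2 statements merged into one kernel-verified Lean document; each statement's English description precedes it below -/
import Mathlib

section
/- Let p ∈ (1,3), λ ∈ ℝ, and set M = max{−λ, 0}. Suppose v₀ > 2M + 2·8^{(p−1)/(3−p)}. Suppose v : [0, u₁] → ℝ is differentiable with v(0) = v₀, v(u₁) = 2u₁^{p−1} + 2M, v(u) > 2u^{p−1} + 2M for u ∈ [0,u₁), and v'(u) = u + u(λ − u^{p−1})/v(u) on [0,u₁]. Then a contradiction follows; that is, no such u₁ > 0 exists. -/
lemma young_aux (a : ℝ) (ha : 0 < a) (ha2 : a < 2) (u : ℝ) (hu : 0 ≤ u) :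
    2 * u ^ a ≤ u ^ 2 / 4 + 2 * (8 : ℝ) ^ (a / (2 - a)) := by
  have h2a : (0:ℝ) < 2 - a := by linarith
  have hC : (0:ℝ) < (8:ℝ) ^ (a / (2 - a)) := Real.rpow_pos_of_pos (by norm_num) _
  rcases eq_or_lt_of_le hu with h | h
  · rw [← h, Real.zero_rpow (ne_of_gt ha)]
    nlinarith [hC]
  · set s : ℝ := (8:ℝ) ^ (2 / (2 - a)) with hs
    have hspos : 0 < s := Real.rpow_pos_of_pos (by norm_num) _
    have hs1 : s ^ (a/2) = (8:ℝ) ^ (a / (2 - a)) := by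
      rw [hs, ← Real.rpow_mul (by norm_num : (0:ℝ) ≤ 8)]
      congr 1
      field_simp
    have hs2 : s ^ (a/2) / s = 1/8 := by
      rw [hs1, hs, ← Real.rpow_sub (by norm_num : (0:ℝ) < 8)]
      have he : a/(2-a) - 2/(2-a) = -1 := by
        field_simp
        ring
      rw [he, Real.rpow_neg_one]
      norm_num
    have hY := Real.geom_mean_le_arith_mean2_weighted
      (by linarith : (0:ℝ) ≤ a/2) (by linarith : (0:ℝ) ≤ 1 - a/2)
      (by positivity : (0:ℝ) ≤ u^2/s) (by norm_num : (0:ℝ) ≤ 1)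
      (by ring)
    rw [Real.one_rpow, mul_one] at hY
    have hua : (u^2/s) ^ (a/2) = u ^ a / s ^ (a/2) := by
      rw [Real.div_rpow (by positivity) hspos.le]
      congr 1
      rw [← Real.rpow_natCast u 2, ← Real.rpow_mul hu]
      congr 1
      push_cast
      ring
    rw [hua] at hY
    have hspow : 0 < s ^ (a/2) := Real.rpow_pos_of_pos hspos _
    have h1 : u ^ a ≤ s ^ (a/2) * ((a/2) * (u^2/s) + (1 - a/2)) := by
      calc u ^ a = s ^ (a/2) * (u ^ a / s ^ (a/2)) := by field_simp
        _ ≤ _ := by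
            apply mul_le_mul_of_nonneg_left _ hspow.le
            linarith
    have h2 : u ^ a ≤ (1/8) * (a/2) * u^2 + (1 - a/2) * (8:ℝ) ^ (a/(2-a)) := by
      calc u ^ a ≤ s ^ (a/2) * ((a/2) * (u^2/s) + (1 - a/2)) := h1
        _ = (s ^ (a/2) / s) * (a/2) * u^2 + s ^ (a/2) * (1 - a/2) := by ring
        _ = _ := by rw [hs2, hs1]; ring
    nlinarith [sq_nonneg u, hC]

theorem stmt_5 (p lam v₀ u₁ : ℝ) (hp1 : 1 < p) (hp3 : p < 3)
    (hv₀ : v₀ > 2 * max (-lam) 0 + 2 * (8 : ℝ) ^ ((p - 1) / (3 - p)))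
    (hu₁ : 0 < u₁) (v : ℝ → ℝ)
    (hd : ∀ u ∈ Set.Icc 0 u₁,
      HasDerivAt v (u + u * (lam - u ^ (p - 1)) / v u) u)
    (h0 : v 0 = v₀)
    (hend : v u₁ = 2 * u₁ ^ (p - 1) + 2 * max (-lam) 0)
    (habove : ∀ u ∈ Set.Ico 0 u₁, v u > 2 * u ^ (p - 1) + 2 * max (-lam) 0) :
    False := by
  set M := max (-lam) 0 with hM
  have hM0 : 0 ≤ M := le_max_right _ _
  have hlamM : -lam ≤ M := le_max_left _ _
  have hC : (0:ℝ) < (8:ℝ) ^ ((p-1)/(3-p)) := Real.rpow_pos_of_pos (by norm_num) _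
  have hvge : ∀ u ∈ Set.Icc (0:ℝ) u₁, 2 * u ^ (p-1) + 2 * M ≤ v u := by
    intro u hu
    rcases eq_or_lt_of_le hu.2 with h | h
    · rw [h, hend]
    · exact le_of_lt (habove u ⟨hu.1, h⟩)
  have hderiv_ge : ∀ u ∈ Set.Icc (0:ℝ) u₁,
      u / 2 ≤ u + u * (lam - u ^ (p-1)) / v u := by
    intro u hu
    rcases eq_or_lt_of_le hu.1 with h | h
    · simp [← h]
    · have hup : 0 < u ^ (p-1) := Real.rpow_pos_of_pos h _
      have hvb := hvge u hu
      have hv : 0 < v u := by linarith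
      have key : -(1/2) * v u ≤ lam - u ^ (p-1) := by nlinarith
      have hdiv : -(1/2) ≤ (lam - u ^ (p-1)) / v u := (le_div_iff₀ hv).2 key
      have : u * (-(1/2)) ≤ u * ((lam - u ^ (p-1)) / v u) :=
        mul_le_mul_of_nonneg_left hdiv h.le
      rw [mul_div_assoc]
      linarith
  -- g u = v u - u^2/4 is monotone on [0,u₁]
  set g : ℝ → ℝ := fun u => v u - u^2/4 with hg
  have hgd : ∀ u ∈ Set.Icc (0:ℝ) u₁,
      HasDerivAt g ((u + u * (lam - u ^ (p-1)) / v u) - u/2) u := by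
    intro u hu
    have h2 : HasDerivAt (fun x : ℝ => x^2/4) (u/2) u := by
      have := (hasDerivAt_pow 2 u).div_const 4
      refine this.congr_deriv ?_
      push_cast
      ring
    exact (hd u hu).sub h2
  have hmono : MonotoneOn g (Set.Icc 0 u₁) := by
    apply monotoneOn_of_deriv_nonneg (convex_Icc 0 u₁)
    · exact fun u hu => (hgd u hu).continuousAt.continuousWithinAt
    · intro u hu
      rw [interior_Icc] at hu
      exact ((hgd u (Set.mem_Icc_of_Ioo hu)).differentiableAt).differentiableWithinAt
    · intro u hu
      rw [interior_Icc] at hu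
      have hu' : u ∈ Set.Icc (0:ℝ) u₁ := Set.mem_Icc_of_Ioo hu
      rw [(hgd u hu').deriv]
      linarith [hderiv_ge u hu']
  have hkey : v₀ + u₁^2/4 ≤ v u₁ := by
    have := hmono (Set.left_mem_Icc.2 hu₁.le) (Set.right_mem_Icc.2 hu₁.le) hu₁.le
    simp only [hg] at this
    rw [h0] at this
    nlinarith [this]
  have hY : 2 * u₁ ^ (p-1) ≤ u₁^2/4 + 2 * (8:ℝ) ^ ((p-1)/(3-p)) := by
    have := young_aux (p-1) (by linarith) (by linarith) u₁ hu₁.le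
    have he : (p-1)/(2-(p-1)) = (p-1)/(3-p) := by ring_nf
    rw [he] at this
    exact this
  rw [hend] at hkey
  linarith
end

section
/- Let p ∈ (1,2], λ ≤ 0, α > 0, A > 0 with A^{p−2} ≤ α, and t₀ ≥ (α² − λ)/2. Define v(x,t) = A·exp(αx + (t+t₀)²) for x ≥ 0, t ≥ 0. Then ∂ₜv − ∂ₓ²v + v∂ₓv − v^p + λv ≥ 0 on [0,∞) × [0,∞). -/
lemma dX (k a c x : ℝ) :
    HasDerivAt (fun w => k * Real.exp (a * w + c)) (k * a * Real.exp (a * x + c)) x := by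
  have h : HasDerivAt (fun w : ℝ => a * w + c) a x := by
    simpa using ((hasDerivAt_id x).const_mul a).add_const c
  have := (h.exp).const_mul k
  exact this.congr_deriv (by ring)

lemma dT (k c t₀ s : ℝ) :
    HasDerivAt (fun s => k * Real.exp (c + (s + t₀) ^ 2))
      (k * (2 * (s + t₀)) * Real.exp (c + (s + t₀) ^ 2)) s := by
  have h0 : HasDerivAt (fun s : ℝ => s + t₀) 1 s := (hasDerivAt_id s).add_const t₀
  have h1 : HasDerivAt (fun s : ℝ => (s + t₀) ^ 2) (2 * (s + t₀)) s := by
    have := h0.pow 2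
    exact this.congr_deriv (by simp)
  have h2 : HasDerivAt (fun s : ℝ => c + (s + t₀) ^ 2) (2 * (s + t₀)) s := h1.const_add c
  have := (h2.exp).const_mul k
  exact this.congr_deriv (by ring)

theorem stmt_11 (p lam α A t₀ : ℝ) (hp1 : 1 < p) (hp2 : p ≤ 2) (hlam : lam ≤ 0)
    (hα : 0 < α) (hA : 0 < A) (hAp : A ^ (p - 2) ≤ α)
    (ht₀ : t₀ ≥ (α ^ 2 - lam) / 2) :
    ∀ x ≥ (0 : ℝ), ∀ t ≥ (0 : ℝ),
      deriv (fun s => A * Real.exp (α * x + (s + t₀) ^ 2)) t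
        - deriv (fun z => deriv (fun w => A * Real.exp (α * w + (t + t₀) ^ 2)) z) x
        + (A * Real.exp (α * x + (t + t₀) ^ 2)) *
            deriv (fun w => A * Real.exp (α * w + (t + t₀) ^ 2)) x
        - (A * Real.exp (α * x + (t + t₀) ^ 2)) ^ p
        + lam * (A * Real.exp (α * x + (t + t₀) ^ 2)) ≥ 0 := by
  intro x hx t ht
  set c := (t + t₀) ^ 2 with hc
  have hdt : deriv (fun s => A * Real.exp (α * x + (s + t₀) ^ 2)) t
      = A * (2 * (t + t₀)) * Real.exp (α * x + c) := (dT A (α * x) t₀ t).deriv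
  have hdx : deriv (fun w => A * Real.exp (α * w + c)) x
      = A * α * Real.exp (α * x + c) := (dX A α c x).deriv
  have hdxx : deriv (fun z => deriv (fun w => A * Real.exp (α * w + c)) z) x
      = A * α * α * Real.exp (α * x + c) := by
    have heq : (fun z => deriv (fun w => A * Real.exp (α * w + c)) z)
        = fun z => (A * α) * Real.exp (α * z + c) := by
      funext z
      exact (dX A α c z).deriv
    rw [heq]
    exact (dX (A * α) α c x).deriv
  rw [hdt, hdxx, hdx]
  set v := A * Real.exp (α * x + c) with hv
  have hEpos : (0:ℝ) < Real.exp (α * x + c) := Real.exp_pos _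
  have hvpos : 0 < v := by positivity
  have hAv : A ≤ v := by
    have h1 : (1:ℝ) ≤ Real.exp (α * x + c) := by
      apply Real.one_le_exp
      have : 0 ≤ α * x := by positivity
      nlinarith [sq_nonneg (t + t₀)]
    nlinarith
  -- v ^ p ≤ α * v ^ 2
  have hvp : v ^ p ≤ α * v ^ (2:ℝ) := by
    have h1 : v ^ p = v ^ (p - 2) * v ^ (2:ℝ) := by
      rw [← Real.rpow_add hvpos]; ring_nf
    have h2 : v ^ (p - 2) ≤ A ^ (p - 2) :=
      Real.rpow_le_rpow_of_nonpos hA hAv (by linarith)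
    have h3 : (0:ℝ) < v ^ (2:ℝ) := Real.rpow_pos_of_pos hvpos 2
    calc v ^ p = v ^ (p - 2) * v ^ (2:ℝ) := h1
      _ ≤ α * v ^ (2:ℝ) := by
          apply mul_le_mul_of_nonneg_right (h2.trans hAp) h3.le
  have hv2 : v ^ (2:ℝ) = v * v := by
    rw [show (2:ℝ) = ((2:ℕ):ℝ) by norm_num, Real.rpow_natCast]; ring
  have ht0 : 2 * (t + t₀) - α ^ 2 + lam ≥ 0 := by nlinarith
  have key : A * (2 * (t + t₀)) * Real.exp (α * x + c) - A * α * α * Real.exp (α * x + c)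
      + v * (A * α * Real.exp (α * x + c)) - v ^ p + lam * v
      = v * (2 * (t + t₀) - α ^ 2 + lam) + (α * (v * v) - v ^ p) := by
    rw [hv]; ring
  rw [key]
  have h5 : α * (v * v) - v ^ p ≥ 0 := by rw [← hv2]; linarith
  have h6 := mul_nonneg hvpos.le ht0
  exact add_nonneg h6 h5
end
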